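/- For the Sym–Tafel immersion of the SUSY sine-Gordon equation, with unit normal N = Ψ⁻¹·diag(−1,1,0)·Ψ and second fundamental form coefficients b_{11} = 0, b_{12} = (β/(2λ)) sin φ, b_{22} = 0, the Gaussian curvature K = (b_{11}b_{22} + b_{12}²)/(g_{11}g_{22} + g_{12}²) equals the constant 4λ²/β², independent of φ. -/

import Mathlib

noncomputable section

/-- Superfunctions f = f₀ + f₁θ¹ + f₂θ² + f₁₂θ¹θ² of two bosonic variables
(x₁,x₂) and two fermionic variables θ¹,θ², encoded by their 4 component
functions (c₀, c₁, c₂, c₁₂), indexed by 0,1,2,3. -/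
def SF : Type := Fin 4 → ℝ × ℝ → ℂ

instance : AddCommGroup SF := inferInstanceAs (AddCommGroup (Fin 4 → ℝ × ℝ → ℂ))
instance : SMul ℂ SF := inferInstanceAs (SMul ℂ (Fin 4 → ℝ × ℝ → ℂ))

/-- multiplication of superfunctions (θ's anticommute and square to zero). -/
instance : Mul SF :=
  ⟨fun f g => ![f 0 * g 0, f 0 * g 1 + f 1 * g 0, f 0 * g 2 + f 2 * g 0,
      f 0 * g 3 + f 3 * g 0 + f 1 * g 2 - f 2 * g 1]⟩

instance : One SF := ⟨![1, 0, 0, 0]⟩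

/-- constant bosonic superfunction. -/
def C (z : ℂ) : SF := ![fun _ => z, 0, 0, 0]

/-- a superfunction is even (bosonic) iff its θ¹ and θ² components vanish. -/
def IsEven (f : SF) : Prop := f 1 = 0 ∧ f 2 = 0

/-- partial derivative ∂_{x_k} of a component function. -/
def pd (k : Fin 2) (h : ℝ × ℝ → ℂ) : ℝ × ℝ → ℂ :=
  fun z => fderiv ℝ h z (if k = 0 then (1, 0) else (0, 1))

/-- The covariant derivatives D_j = ∂_{θ^j} − iθ^j ∂_{x_j} on components. -/
def D : Fin 2 → SF → SF := fun j f =>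
  if j = 0 then
    ![f 1, fun z => -Complex.I * pd 0 (f 0) z, f 3, fun z => -Complex.I * pd 0 (f 2) z]
  else
    ![f 2, fun z => -(f 3 z), fun z => -Complex.I * pd 1 (f 0) z,
      fun z => Complex.I * pd 1 (f 1) z]

/-- exponential of a superfunction (the nilpotent part exponentiates finitely). -/
def expSF (f : SF) : SF :=
  ![fun z => Complex.exp (f 0 z), fun z => Complex.exp (f 0 z) * f 1 z,
    fun z => Complex.exp (f 0 z) * f 2 z, fun z => Complex.exp (f 0 z) * f 3 z]

/-- sine of a superfunction, sin f = (e^{if} − e^{−if})/(2i). -/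
def sinSF (f : SF) : SF :=
  C (1 / (2 * Complex.I)) * (expSF (C Complex.I * f) - expSF (-(C Complex.I * f)))

/-- cosine of a superfunction, cos f = (e^{if} + e^{−if})/2. -/
def cosSF (f : SF) : SF :=
  C (1 / 2) * (expSF (C Complex.I * f) + expSF (-(C Complex.I * f)))

-- component lemmas
lemma SF_mul0 (f g : SF) : (f*g) 0 = f 0 * g 0 := rfl
lemma SF_mul1 (f g : SF) : (f*g) 1 = f 0 * g 1 + f 1 * g 0 := rfl
lemma SF_mul2 (f g : SF) : (f*g) 2 = f 0 * g 2 + f 2 * g 0 := rfl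
lemma SF_mul3 (f g : SF) : (f*g) 3 = f 0 * g 3 + f 3 * g 0 + f 1 * g 2 - f 2 * g 1 := rfl
lemma SF_add (f g : SF) (i : Fin 4) : (f+g) i = f i + g i := rfl
lemma SF_sub (f g : SF) (i : Fin 4) : (f-g) i = f i - g i := rfl
lemma SF_neg (f : SF) (i : Fin 4) : (-f) i = -(f i) := rfl
lemma SF_zero (i : Fin 4) : (0 : SF) i = 0 := rfl
lemma SF_one0 : (1 : SF) 0 = 1 := rfl
lemma SF_one1 : (1 : SF) 1 = 0 := rfl
lemma C0 (z : ℂ) : C z 0 = fun _ => z := rfl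
lemma C1 (z : ℂ) : C z 1 = 0 := rfl
lemma C2 (z : ℂ) : C z 2 = 0 := rfl
lemma C3 (z : ℂ) : C z 3 = 0 := rfl
lemma exp0 (f : SF) : expSF f 0 = fun z => Complex.exp (f 0 z) := rfl
lemma exp1 (f : SF) : expSF f 1 = fun z => Complex.exp (f 0 z) * f 1 z := rfl
lemma exp2 (f : SF) : expSF f 2 = fun z => Complex.exp (f 0 z) * f 2 z := rfl
lemma exp3 (f : SF) : expSF f 3 = fun z => Complex.exp (f 0 z) * f 3 z := rfl

section
set_option linter.unusedSectionVars false
variable (φ : SF) (hφ1 : φ 1 = 0) (hφ2 : φ 2 = 0)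
include hφ1 hφ2

lemma sin_c0 (z : ℝ × ℝ) : sinSF φ 0 z
    = 1 / (2*Complex.I) * (Complex.exp (Complex.I * φ 0 z) - (Complex.exp (Complex.I * φ 0 z))⁻¹) := by
  simp [sinSF, SF_mul0, SF_sub, SF_neg, C0, exp0, Complex.exp_neg]

lemma cos_c0 (z : ℝ × ℝ) : cosSF φ 0 z
    = 1 / 2 * (Complex.exp (Complex.I * φ 0 z) + (Complex.exp (Complex.I * φ 0 z))⁻¹) := by
  simp [cosSF, SF_mul0, SF_add, SF_neg, C0, exp0, Complex.exp_neg]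

lemma sin_c1 : sinSF φ 1 = 0 := by
  funext z
  simp [sinSF, SF_mul1, SF_mul0, SF_sub, SF_neg, C0, C1, exp0, exp1, hφ1]

lemma sin_c2 : sinSF φ 2 = 0 := by
  funext z
  simp [sinSF, SF_mul2, SF_mul0, SF_sub, SF_neg, C0, C2, exp0, exp2, hφ2]

lemma cos_c1 : cosSF φ 1 = 0 := by
  funext z
  simp [cosSF, SF_mul1, SF_mul0, SF_add, SF_neg, C0, C1, exp0, exp1, hφ1]

lemma cos_c2 : cosSF φ 2 = 0 := by
  funext z
  simp [cosSF, SF_mul2, SF_mul0, SF_add, SF_neg, C0, C2, exp0, exp2, hφ2]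

lemma sin_c3 (z : ℝ × ℝ) : sinSF φ 3 z
    = 1 / (2*Complex.I) * (Complex.I * φ 3 z) *
      (Complex.exp (Complex.I * φ 0 z) + (Complex.exp (Complex.I * φ 0 z))⁻¹) := by
  simp [sinSF, SF_mul3, SF_mul0, SF_mul1, SF_mul2, SF_sub, SF_neg, C0, C1, C2, C3,
    exp0, exp3, hφ1, hφ2, Complex.exp_neg]
  ring

lemma cos_c3 (z : ℝ × ℝ) : cosSF φ 3 z
    = 1 / 2 * (Complex.I * φ 3 z) *
      (Complex.exp (Complex.I * φ 0 z) - (Complex.exp (Complex.I * φ 0 z))⁻¹) := by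
  simp [cosSF, SF_mul3, SF_mul0, SF_mul1, SF_mul2, SF_add, SF_neg, C0, C1, C2, C3,
    exp0, exp3, hφ1, hφ2, Complex.exp_neg]
  ring

lemma pyth0 (z : ℝ × ℝ) : (cosSF φ 0 z)^2 + (sinSF φ 0 z)^2 = 1 := by
  rw [cos_c0 φ hφ1 hφ2 z, sin_c0 φ hφ1 hφ2 z]
  have h := Complex.exp_ne_zero (Complex.I * φ 0 z)
  field_simp
  linear_combination (1 - 2 * Complex.exp (Complex.I * φ 0 z) ^ 2
    + Complex.exp (Complex.I * φ 0 z) ^ 4) * Complex.I_sq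

lemma ortho3 (z : ℝ × ℝ) :
    cosSF φ 0 z * cosSF φ 3 z + sinSF φ 0 z * sinSF φ 3 z = 0 := by
  rw [cos_c0 φ hφ1 hφ2 z, sin_c0 φ hφ1 hφ2 z, cos_c3 φ hφ1 hφ2 z, sin_c3 φ hφ1 hφ2 z]
  have h := Complex.exp_ne_zero (Complex.I * φ 0 z)
  field_simp
  linear_combination (φ 3 z * (Complex.exp (Complex.I * φ 0 z) ^ 4 - 1)) * Complex.I_sq
end
lemma alg0 (lam β c0 s0 k : ℂ) (hlam : lam ≠ 0) (hβ : β ≠ 0) (hs : s0 ≠ 0)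
    (h : (-Complex.I * β^2/(8*lam^3) * (Complex.I*β^2/(2*lam))
        + -Complex.I*β^2/(4*lam^2)*c0 * (-Complex.I*β^2/(4*lam^2)*c0)) * k
        = β/(2*lam)*s0*(β/(2*lam)*s0))
    (hcs : c0^2+s0^2=1) : k = 4*lam^2/β^2 := by
  rw [eq_div_iff (pow_ne_zero 2 hβ)]
  field_simp at h
  have h2 : (64:ℂ)*β^2*lam^6*s0^2*(k*β^2 - 4*lam^2) = 0 := by
    linear_combination (2*β^2*lam^6)*h + (64*β^4*lam^6*k)*hcs + (64*β^4*lam^6*k*(1-c0^2))*Complex.I_sq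
  have hne : (64:ℂ)*β^2*lam^6*s0^2 ≠ 0 := by
    simp [hβ, hlam, hs, pow_ne_zero]
  exact sub_eq_zero.mp ((mul_eq_zero.mp h2).resolve_left hne)

lemma alg1 (lam β c0 s0 k : ℂ) (hlam : lam ≠ 0) (hβ : β ≠ 0) (hs : s0 ≠ 0)
    (h : (-Complex.I * β^2/(8*lam^3) * (Complex.I*β^2/(2*lam))
        + -Complex.I*β^2/(4*lam^2)*c0 * (-Complex.I*β^2/(4*lam^2)*c0)) * k = 0)
    (hcs : c0^2+s0^2=1) : k = 0 := by
  field_simp at h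
  have h2 : ((16:ℂ)*β^4*lam^4*s0^2)*k = 0 := by
    linear_combination lam^4*h + (16*β^4*lam^4*k)*hcs + (16*β^4*lam^4*k*(1-c0^2))*Complex.I_sq
  have hne : ((16:ℂ)*β^4*lam^4*s0^2) ≠ 0 := by
    simp [hβ, hlam, hs, pow_ne_zero]
  exact (mul_eq_zero.mp h2).resolve_left hne

lemma alg3 (lam β c0 c3 s0 s3 k : ℂ) (hlam : lam ≠ 0) (hβ : β ≠ 0) (hs : s0 ≠ 0)
    (h : (-Complex.I * β^2/(8*lam^3) * (Complex.I*β^2/(2*lam))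
        + -Complex.I*β^2/(4*lam^2)*c0 * (-Complex.I*β^2/(4*lam^2)*c0)) * k
      + (-Complex.I*β^2/(4*lam^2)*c0 * (-Complex.I*β^2/(4*lam^2)*c3)
        + -Complex.I*β^2/(4*lam^2)*c3 * (-Complex.I*β^2/(4*lam^2)*c0)) * (4*lam^2/β^2)
      = β/(2*lam)*s0*(β/(2*lam)*s3) + β/(2*lam)*s3*(β/(2*lam)*s0))
    (hcs : c0^2+s0^2=1) (ho : c0*c3+s0*s3=0) : k = 0 := by
  field_simp at h
  have h2 : ((1024:ℂ)*β^6*lam^10*s0^2)*k = 0 := by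
    linear_combination (32*β^4*lam^10)*h + (1024*β^6*lam^10*k)*hcs + (8192*β^4*lam^12)*ho
      + (1024*β^6*lam^10*k*(1-c0^2) - 8192*β^4*lam^12*c0*c3)*Complex.I_sq
  have hne : ((1024:ℂ)*β^6*lam^10*s0^2) ≠ 0 := by
    simp [hβ, hlam, hs, pow_ne_zero]
  exact (mul_eq_zero.mp h2).resolve_left hne

/-- for the Sym–Tafel immersion of the SUSY sine-Gordon equation,
with first fundamental form coefficients g₁₁ = −iβ²/(8λ³),
g₁₂ = −(iβ²/(4λ²))cos φ, g₂₂ = iβ²/(2λ) and second fundamental form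
coefficients b₁₁ = 0, b₁₂ = (β/(2λ))sin φ, b₂₂ = 0, the Gaussian curvature
K = (b₁₁b₂₂ + b₁₂²)/(g₁₁g₂₂ + g₁₂²) equals the constant 4λ²/β², independent of
φ (assuming sin φ is invertible). -/
theorem symTafel_gaussian_curvature_constant (lam β : ℂ) (hlam : lam ≠ 0) (hβ : β ≠ 0)
    (φ : SF) (hφ : IsEven φ)
    (hs : ∃ s : SF, sinSF φ * s = 1 ∧ s * sinSF φ = 1) (K : SF)
    (hK : (C (-Complex.I * β ^ 2 / (8 * lam ^ 3)) * C (Complex.I * β ^ 2 / (2 * lam))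
          + (C (-Complex.I * β ^ 2 / (4 * lam ^ 2)) * cosSF φ)
            * (C (-Complex.I * β ^ 2 / (4 * lam ^ 2)) * cosSF φ)) * K
        = (0 : SF) * (0 : SF)
          + (C (β / (2 * lam)) * sinSF φ) * (C (β / (2 * lam)) * sinSF φ)) :
    K = C (4 * lam ^ 2 / β ^ 2) := by
  obtain ⟨hφ1, hφ2⟩ := hφ
  obtain ⟨s, hs1, -⟩ := hs
  have hs0 : ∀ z, sinSF φ 0 z ≠ 0 := by
    intro z hz
    have h := congrFun (congrFun hs1 0) z
    rw [SF_mul0] at h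
    simp only [Pi.mul_apply, SF_one0, Pi.one_apply, hz, zero_mul] at h
    exact zero_ne_one h
  have hK0 : ∀ z, K 0 z = 4 * lam^2 / β^2 := by
    intro z
    have h0 := congrFun (congrFun hK 0) z
    simp only [SF_mul0, SF_add, SF_zero, C0, Pi.add_apply, Pi.mul_apply,
      Pi.zero_apply, zero_mul, mul_zero, zero_add, add_zero] at h0
    exact alg0 lam β _ _ _ hlam hβ (hs0 z) h0 (pyth0 φ hφ1 hφ2 z)
  have hK1 : ∀ z, K 1 z = 0 := by
    intro z
    have h1 := congrFun (congrFun hK 1) z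
    simp only [SF_mul1, SF_mul0, SF_add, SF_zero, C0, C1,
      sin_c1 φ hφ1 hφ2, cos_c1 φ hφ1 hφ2, Pi.add_apply, Pi.mul_apply,
      Pi.zero_apply, zero_mul, mul_zero, zero_add, add_zero] at h1
    exact alg1 lam β _ _ _ hlam hβ (hs0 z) h1 (pyth0 φ hφ1 hφ2 z)
  have hK2 : ∀ z, K 2 z = 0 := by
    intro z
    have h2 := congrFun (congrFun hK 2) z
    simp only [SF_mul2, SF_mul0, SF_add, SF_zero, C0, C2,
      sin_c2 φ hφ1 hφ2, cos_c2 φ hφ1 hφ2, Pi.add_apply, Pi.mul_apply,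
      Pi.zero_apply, zero_mul, mul_zero, zero_add, add_zero] at h2
    exact alg1 lam β _ _ _ hlam hβ (hs0 z) h2 (pyth0 φ hφ1 hφ2 z)
  have hK3 : ∀ z, K 3 z = 0 := by
    intro z
    have h3 := congrFun (congrFun hK 3) z
    simp only [SF_mul3, SF_mul2, SF_mul1, SF_mul0, SF_add, SF_sub, SF_zero, C0, C1, C2, C3,
      sin_c1 φ hφ1 hφ2, sin_c2 φ hφ1 hφ2, cos_c1 φ hφ1 hφ2, cos_c2 φ hφ1 hφ2,
      Pi.add_apply, Pi.mul_apply, Pi.sub_apply,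
      Pi.zero_apply, zero_mul, mul_zero, zero_add, add_zero, sub_zero] at h3
    rw [hK0 z] at h3
    exact alg3 lam β _ _ _ _ _ hlam hβ (hs0 z) h3 (pyth0 φ hφ1 hφ2 z) (ortho3 φ hφ1 hφ2 z)
  funext i
  fin_cases i
  · funext z; exact hK0 z
  · funext z; exact hK1 z
  · funext z; exact hK2 z
  · funext z; exact hK3 z
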